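/- Let X be a completely regular Hausdorff space, E a nonzero Banach space over 𝕜, and 𝒜 a standard subalgebra of B(E). Then for all F₁, F₂ ∈ C(X, 𝒜): c(F₁) ∩ c(F₂) = ∅ if and only if 𝒞(F₁) ∩ 𝒞(F₂) = {0}. -/

import Mathlib

set_option synthInstance.maxHeartbeats 400000
set_option maxHeartbeats 1000000

/-- A subalgebra of `B(E)` is *standard* if it contains every continuous finite-rank
operator (it contains the identity automatically, being a subalgebra). -/
def IsStandardSubalgebra (𝕜 : Type*) [RCLike 𝕜] {E : Type*} [NormedAddCommGroup E]
    [NormedSpace 𝕜 E] (𝒜 : Subalgebra 𝕜 (E →L[𝕜] E)) : Prop :=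
  ∀ A : E →L[𝕜] E, FiniteDimensional 𝕜 (LinearMap.range (A : E →ₗ[𝕜] E)) → A ∈ 𝒜

section Aux

variable {𝕜 : Type*} [RCLike 𝕜] {E : Type*} [NormedAddCommGroup E] [NormedSpace 𝕜 E]
  {X : Type*} [TopologicalSpace X]

/-- A scalar continuous function times the identity, as an element of `C(X, 𝒜)`. -/
noncomputable def scalFun (𝒜 : Subalgebra 𝕜 (E →L[𝕜] E)) (ψ : C(X, ℝ)) : C(X, 𝒜) :=
  ⟨fun x => ⟨((ψ x : ℝ) : 𝕜) • 1, 𝒜.smul_mem 𝒜.one_mem _⟩,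
   (((by fun_prop) :
     Continuous fun x => ((ψ x : ℝ) : 𝕜) • (1 : E →L[𝕜] E))).subtype_mk _⟩

lemma scalFun_coe (𝒜 : Subalgebra 𝕜 (E →L[𝕜] E)) (ψ : C(X, ℝ)) (x : X) :
    ((scalFun 𝒜 ψ x : 𝒜) : E →L[𝕜] E) = ((ψ x : ℝ) : 𝕜) • 1 := rfl

lemma scalFun_mul_apply (𝒜 : Subalgebra 𝕜 (E →L[𝕜] E)) (ψ : C(X, ℝ)) (H : C(X, 𝒜))
    (x : X) : (((scalFun 𝒜 ψ * H) x : 𝒜) : E →L[𝕜] E)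
      = ((ψ x : ℝ) : 𝕜) • ((H x : 𝒜) : E →L[𝕜] E) := by
  rw [ContinuousMap.mul_apply, MulMemClass.coe_mul, scalFun_coe, smul_mul_assoc, one_mul]

lemma mul_scalFun_apply (𝒜 : Subalgebra 𝕜 (E →L[𝕜] E)) (ψ : C(X, ℝ)) (H : C(X, 𝒜))
    (x : X) : (((H * scalFun 𝒜 ψ) x : 𝒜) : E →L[𝕜] E)
      = ((ψ x : ℝ) : 𝕜) • ((H x : 𝒜) : E →L[𝕜] E) := by
  rw [ContinuousMap.mul_apply, MulMemClass.coe_mul, scalFun_coe, mul_smul_comm, mul_one]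

/-- scalar functions commute with everything pointwise. -/
lemma scalFun_comm (𝒜 : Subalgebra 𝕜 (E →L[𝕜] E)) (ψ : C(X, ℝ)) (K : C(X, 𝒜)) :
    K * scalFun 𝒜 ψ = scalFun 𝒜 ψ * K := by
  refine ContinuousMap.ext fun x => Subtype.ext ?_
  rw [mul_scalFun_apply, scalFun_mul_apply]

/-- Key Lemma B: if `H` satisfies the AI condition and `F * H = 0`, then `H` vanishes on
the cozero set of `F`. -/
lemma vanish_on_cozero (𝒜 : Subalgebra 𝕜 (E →L[𝕜] E)) (h𝒜 : IsStandardSubalgebra 𝕜 𝒜)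
    (F H : C(X, 𝒜)) (hAI : ∀ K : C(X, 𝒜), K * H = 0 → H * K = 0) (hFH : F * H = 0)
    {y : X} (hy : F y ≠ 0) : H y = 0 := by
  -- pick a vector not killed by F y and a dual functional
  have hy' : ((F y : 𝒜) : E →L[𝕜] E) ≠ 0 := by
    simpa [ZeroMemClass.coe_eq_zero] using hy
  obtain ⟨w, hw⟩ : ∃ w, ((F y : 𝒜) : E →L[𝕜] E) w ≠ 0 := by
    by_contra h
    push_neg at h
    exact hy' (ContinuousLinearMap.ext fun v => by simpa using h v)
  obtain ⟨f, -, hf⟩ := exists_dual_vector 𝕜 _ (norm_ne_zero_iff.mpr hw)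
  have hfw : f (((F y : 𝒜) : E →L[𝕜] E) w) ≠ 0 := by
    rw [hf]
    simpa [RCLike.ofReal_eq_zero] using norm_ne_zero_iff.mpr hw
  -- show H y u = 0 for every u
  have key : ∀ u : E, ((H y : 𝒜) : E →L[𝕜] E) u = 0 := by
    intro u
    -- the rank-one valued continuous function K
    have hmem : ∀ x : X, ((f.comp ((F x : 𝒜) : E →L[𝕜] E)).smulRight u) ∈ 𝒜 := by
      intro x
      apply h𝒜
      have hle : LinearMap.range (((f.comp ((F x : 𝒜) : E →L[𝕜] E)).smulRight u :
          E →L[𝕜] E) : E →ₗ[𝕜] E) ≤ Submodule.span 𝕜 {u} := by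
        rintro _ ⟨v, rfl⟩
        exact Submodule.smul_mem _ _ (Submodule.mem_span_singleton_self u)
      exact Submodule.finiteDimensional_of_le hle
    have hcont : Continuous fun x : X =>
        ((f.comp ((F x : 𝒜) : E →L[𝕜] E)).smulRight u) := by
      have h1 : Continuous fun x : X => ((F x : 𝒜) : E →L[𝕜] E) :=
        continuous_subtype_val.comp F.continuous
      have h2 : Continuous fun x : X => f.comp ((F x : 𝒜) : E →L[𝕜] E) :=
        ((ContinuousLinearMap.compL 𝕜 E E 𝕜 f).continuous).comp h1
      exact (((ContinuousLinearMap.smulRightL 𝕜 E E).flip u).continuous).comp h2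
    let K : C(X, 𝒜) :=
      ⟨fun x => ⟨(f.comp ((F x : 𝒜) : E →L[𝕜] E)).smulRight u, hmem x⟩,
        hcont.subtype_mk _⟩
    have hKH : K * H = 0 := by
      refine ContinuousMap.ext fun x => Subtype.ext (ContinuousLinearMap.ext fun v => ?_)
      have hzero : ((F x : 𝒜) : E →L[𝕜] E) * ((H x : 𝒜) : E →L[𝕜] E) = 0 := by
        have := congrArg (fun G : C(X, 𝒜) => ((G x : 𝒜) : E →L[𝕜] E)) hFH
        simpa [ContinuousMap.mul_apply, MulMemClass.coe_mul] using this
      have hzv : ((F x : 𝒜) : E →L[𝕜] E) (((H x : 𝒜) : E →L[𝕜] E) v) = 0 := by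
        have := congrFun (congrArg DFunLike.coe hzero) v
        simpa using this
      show (((K x * H x : 𝒜) : E →L[𝕜] E)) v = (((0 : C(X, 𝒜)) x : 𝒜) : E →L[𝕜] E) v
      rw [MulMemClass.coe_mul]
      simp only [K, ContinuousMap.coe_mk, ContinuousLinearMap.mul_apply,
        ContinuousLinearMap.smulRight_apply, ContinuousLinearMap.comp_apply, hzv]
      simp
    have hHK := hAI K hKH
    have h0 : ((H y : 𝒜) : E →L[𝕜] E) (((K y : 𝒜) : E →L[𝕜] E) w) = 0 := by
      have h1 := congrArg (fun G : C(X, 𝒜) => ((G y : 𝒜) : E →L[𝕜] E)) hHK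
      simp only [ContinuousMap.mul_apply, MulMemClass.coe_mul] at h1
      have h2 := congrFun (congrArg DFunLike.coe h1) w
      simpa using h2
    have hKyw : ((K y : 𝒜) : E →L[𝕜] E) w = f (((F y : 𝒜) : E →L[𝕜] E) w) • u := rfl
    rw [hKyw, map_smul] at h0
    rcases smul_eq_zero.mp h0 with h | h
    · exact absurd h hfw
    · exact h
  exact Subtype.ext (ContinuousLinearMap.ext fun u => by simpa using key u)

/-- If `ψ` is supported in the cozero set of `F`, then `scalFun ψ ∈ 𝒞(F)`. -/
lemma scalFun_mem_C (𝒜 : Subalgebra 𝕜 (E →L[𝕜] E)) (h𝒜 : IsStandardSubalgebra 𝕜 𝒜)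
    (F : C(X, 𝒜)) (ψ : C(X, ℝ)) (hsupp : ∀ z, ψ z ≠ 0 → F z ≠ 0) (H : C(X, 𝒜))
    (hAI : ∀ K : C(X, 𝒜), K * H = 0 → H * K = 0) (hFH : F * H = 0) :
    scalFun 𝒜 ψ * H = 0 := by
  refine ContinuousMap.ext fun z => Subtype.ext ?_
  rw [scalFun_mul_apply]
  by_cases hz : ψ z = 0
  · simp [hz]
  · have hHz : H z = 0 := vanish_on_cozero 𝒜 h𝒜 F H hAI hFH (hsupp z hz)
    simp [hHz]

end Aux

theorem cozero_disjoint_iff_C_inter_trivial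
    {𝕜 : Type*} [RCLike 𝕜]
    {E : Type*} [NormedAddCommGroup E] [NormedSpace 𝕜 E] [CompleteSpace E] [Nontrivial E]
    (𝒜 : Subalgebra 𝕜 (E →L[𝕜] E)) (h𝒜 : IsStandardSubalgebra 𝕜 𝒜)
    {X : Type*} [TopologicalSpace X] [CompletelyRegularSpace X] [T2Space X]
    (F₁ F₂ : C(X, 𝒜)) :
    {x | F₁ x ≠ 0} ∩ {x | F₂ x ≠ 0} = ∅ ↔
      {G : C(X, 𝒜) | ∀ H : C(X, 𝒜),
          (∀ K : C(X, 𝒜), K * H = 0 → H * K = 0) → F₁ * H = 0 → G * H = 0} ∩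
        {G : C(X, 𝒜) | ∀ H : C(X, 𝒜),
          (∀ K : C(X, 𝒜), K * H = 0 → H * K = 0) → F₂ * H = 0 → G * H = 0} = {0} := by
  constructor
  · -- disjoint cozeros ⇒ intersection trivial
    intro hdisj
    apply Set.eq_singleton_iff_unique_mem.mpr
    constructor
    · have hz : ∀ H : C(X, 𝒜), (0 : C(X, 𝒜)) * H = 0 := by
        intro H
        refine ContinuousMap.ext fun z => Subtype.ext ?_
        rw [ContinuousMap.mul_apply, MulMemClass.coe_mul]
        simp
      exact ⟨fun H _ _ => hz H, fun H _ _ => hz H⟩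
    · rintro G ⟨hG₁, hG₂⟩
      -- Lemma A: c(G) ⊆ closure c(Fᵢ)
      have lemA : ∀ (F : C(X, 𝒜)), (∀ H : C(X, 𝒜),
          (∀ K : C(X, 𝒜), K * H = 0 → H * K = 0) → F * H = 0 → G * H = 0) →
          ∀ x : X, G x ≠ 0 → x ∈ closure {z | F z ≠ 0} := by
        intro F hGF x hGx
        by_contra hx
        obtain ⟨φ, hφc, hφx, hφ1⟩ := CompletelyRegularSpace.completely_regular x
          (closure {z | F z ≠ 0}) isClosed_closure hx
        set ψ : C(X, ℝ) := ⟨fun z => 1 - (φ z : ℝ),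
          continuous_const.sub (continuous_subtype_val.comp hφc)⟩ with hψ
        have hψx : ψ x = 1 := by simp [hψ, hφx]
        have hψ0 : ∀ z, F z ≠ 0 → ψ z = 0 := by
          intro z hz
          have : φ z = 1 := hφ1 (subset_closure hz)
          simp [hψ, this]
        have hFH : F * scalFun 𝒜 ψ = 0 := by
          refine ContinuousMap.ext fun z => Subtype.ext ?_
          rw [mul_scalFun_apply]
          by_cases hz : F z = 0
          · simp [hz]
          · simp [hψ0 z hz]
        have hGH := hGF (scalFun 𝒜 ψ) (fun K hK => by rw [← scalFun_comm]; exact hK) hFH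
        have := congrArg (fun W : C(X, 𝒜) => ((W x : 𝒜) : E →L[𝕜] E)) hGH
        simp only [mul_scalFun_apply, hψx] at this
        apply hGx
        apply Subtype.ext
        simpa using this
      -- now derive G = 0
      by_contra hGne
      obtain ⟨x₀, hx₀⟩ : ∃ x, G x ≠ 0 := by
        by_contra h
        push_neg at h
        exact hGne (ContinuousMap.ext h)
      have hUopen : IsOpen {z : X | G z ≠ 0} := by
        have : IsOpen ({(0 : 𝒜)}ᶜ) := isOpen_compl_singleton
        exact this.preimage G.continuous
      have hU1 : {z : X | G z ≠ 0} ⊆ closure {z | F₁ z ≠ 0} := fun z hz => lemA F₁ hG₁ z hz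
      have hU2 : {z : X | G z ≠ 0} ⊆ closure {z | F₂ z ≠ 0} := fun z hz => lemA F₂ hG₂ z hz
      -- x₀ ∈ closure c(F₁); the open set {G ≠ 0} meets c(F₁)
      obtain ⟨x₁, hx₁U, hx₁F⟩ : ∃ z, z ∈ {z : X | G z ≠ 0} ∧ z ∈ {z | F₁ z ≠ 0} := by
        have := (mem_closure_iff.mp (hU1 hx₀)) _ hUopen hx₀
        obtain ⟨z, hz1, hz2⟩ := this
        exact ⟨z, hz1, hz2⟩
      have hopen2 : IsOpen ({z : X | G z ≠ 0} ∩ {z | F₁ z ≠ 0}) := by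
        apply hUopen.inter
        have : IsOpen ({(0 : 𝒜)}ᶜ) := isOpen_compl_singleton
        exact this.preimage F₁.continuous
      obtain ⟨x₂, hx₂, hx₂F₂⟩ := (mem_closure_iff.mp (hU2 hx₁U)) _ hopen2 ⟨hx₁U, hx₁F⟩
      exact (Set.eq_empty_iff_forall_notMem.mp hdisj x₂) ⟨hx₂.2, hx₂F₂⟩
  · -- intersection trivial ⇒ disjoint cozeros
    intro htriv
    rw [Set.eq_empty_iff_forall_notMem]
    rintro x ⟨hx₁, hx₂⟩
    have hopen : IsOpen ({z : X | F₁ z ≠ 0} ∩ {z | F₂ z ≠ 0}) := by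
      have h0 : IsOpen ({(0 : 𝒜)}ᶜ) := isOpen_compl_singleton
      exact (h0.preimage F₁.continuous).inter (h0.preimage F₂.continuous)
    obtain ⟨φ, hφc, hφx, hφ1⟩ := CompletelyRegularSpace.completely_regular x
      (({z : X | F₁ z ≠ 0} ∩ {z | F₂ z ≠ 0})ᶜ) hopen.isClosed_compl
      (by simp only [Set.mem_compl_iff, not_not]; exact ⟨hx₁, hx₂⟩)
    set ψ : C(X, ℝ) := ⟨fun z => 1 - (φ z : ℝ),
      continuous_const.sub (continuous_subtype_val.comp hφc)⟩ with hψ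
    have hψx : ψ x = 1 := by simp [hψ, hφx]
    have hψ0 : ∀ z, z ∉ ({z : X | F₁ z ≠ 0} ∩ {z | F₂ z ≠ 0}) → ψ z = 0 := by
      intro z hz
      have : φ z = 1 := hφ1 hz
      simp [hψ, this]
    have hsupp : ∀ (F : C(X, 𝒜)), (∀ z, z ∈ ({z : X | F₁ z ≠ 0} ∩ {z | F₂ z ≠ 0}) →
        F z ≠ 0) → ∀ z, ψ z ≠ 0 → F z ≠ 0 := by
      intro F hF z hz
      by_cases hmem : z ∈ ({z : X | F₁ z ≠ 0} ∩ {z | F₂ z ≠ 0})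
      · exact hF z hmem
      · exact absurd (hψ0 z hmem) hz
    have hGin := (Set.ext_iff.mp htriv (scalFun 𝒜 ψ)).mp
      ⟨fun H hAI hFH => scalFun_mem_C 𝒜 h𝒜 F₁ ψ (hsupp F₁ (fun z hz => hz.1)) H hAI hFH,
       fun H hAI hFH => scalFun_mem_C 𝒜 h𝒜 F₂ ψ (hsupp F₂ (fun z hz => hz.2)) H hAI hFH⟩
    rw [Set.mem_singleton_iff] at hGin
    -- But G x = 1 ≠ 0
    have hGx : ((scalFun 𝒜 ψ x : 𝒜) : E →L[𝕜] E) = 1 := by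
      rw [scalFun_coe, hψx]
      simp
    rw [hGin] at hGx
    simp only [ContinuousMap.zero_apply, ZeroMemClass.coe_zero] at hGx
    obtain ⟨v, hv⟩ := exists_ne (0 : E)
    have hv2 := congrFun (congrArg DFunLike.coe hGx) v
    have hv3 : v = 0 := by simpa using hv2.symm
    exact hv hv3
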